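/- Suppose: (a) the span of V(f)* is all of F_q^n, V(f)* contains no punctured hyperplane H(v)* = H(v) \ {0}, and for every pair of distinct hyperplanes H(v), H(v') through the origin, V(f)* ∩ H(v) is not contained in H(v'); and (b) for every nonzero v ∈ F_q^n there exists x with f(x) + v·x = 0 and f(x) ≠ 0. Then the code C_f = {(u·f(x) + v·x)_{x ≠ 0} : u ∈ F_q, v ∈ F_q^n} is a minimal linear code of length q^n − 1 and dimension n + 1. -/

import Mathlib

/-- The generating map of the code `C_f`: the pair `(u, v)` is sent to the word
`c(u,v) = (u·f(x) + v·x)_{x ∈ F_q^n \ {0}}`. -/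
def cfWord (F : Type) [Field F] (n : ℕ) (f : (Fin n → F) → F)
    (p : F × (Fin n → F)) : {x : Fin n → F // x ≠ 0} → F :=
  fun x => p.1 * f x.1 + ∑ i, p.2 i * x.1 i

section Aux

variable {F : Type} [Field F] {n : ℕ}

lemma dot_single (v : Fin n → F) (j : Fin n) :
    ∑ i, v i * (Pi.single j 1 : Fin n → F) i = v j := by
  simp [Pi.single_apply, mul_ite, Finset.sum_ite_eq']

lemma single_ne_zero' (j : Fin n) : (Pi.single j 1 : Fin n → F) ≠ 0 := by
  intro h
  have := congrFun h j
  simp at this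

lemma dot_ker (v v' : Fin n → F)
    (h : ∀ x : Fin n → F, x ≠ 0 → ∑ i, v i * x i = 0 → ∑ i, v' i * x i = 0) :
    ∃ lam : F, ∀ j, v' j = lam * v j := by
  by_cases hv : v = 0
  · refine ⟨0, fun j => ?_⟩
    have := h (Pi.single j 1) (single_ne_zero' j) (by simp [hv])
    rw [dot_single] at this
    simp [this]
  · obtain ⟨i, hi⟩ : ∃ i, v i ≠ 0 := by
      by_contra h'; push_neg at h'; exact hv (funext h')
    refine ⟨v' i / v i, fun j => ?_⟩
    by_cases hij : j = i
    · subst hij; field_simp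
    · set x : Fin n → F := fun k => v i * (Pi.single j 1 : Fin n → F) k - v j * (Pi.single i 1 : Fin n → F) k with hx
      have hxj : x j = v i := by simp [hx, Pi.single_apply, hij]
      have hdot : ∀ a : Fin n → F, ∑ k, a k * x k = v i * a j - v j * a i := by
        intro a
        have h1 : ∀ k, a k * x k =
            v i * (a k * (Pi.single j 1 : Fin n → F) k) - v j * (a k * (Pi.single i 1 : Fin n → F) k) := by
          intro k; simp only [hx]; ring
        rw [Finset.sum_congr rfl (fun k _ => h1 k), Finset.sum_sub_distrib,
          ← Finset.mul_sum, ← Finset.mul_sum, dot_single, dot_single]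
      have hxne : x ≠ 0 := by
        intro hz
        rw [hz] at hxj
        exact hi (by simpa using hxj.symm)
      have h0 := h x hxne (by rw [hdot]; ring)
      rw [hdot] at h0
      field_simp
      linear_combination h0

lemma eq_zero_of_span_le (v : Fin n → F) (S : Set (Fin n → F))
    (hS : Submodule.span F S = ⊤) (h : ∀ x ∈ S, ∑ i, v i * x i = 0) : v = 0 := by
  let L : (Fin n → F) →ₗ[F] F :=
    { toFun := fun x => ∑ i, v i * x i
      map_add' := by intro a b; simp [mul_add, Finset.sum_add_distrib]
      map_smul' := by intro c a; simp [Finset.mul_sum, smul_eq_mul, mul_left_comm] }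
  have hle : Submodule.span F S ≤ LinearMap.ker L :=
    Submodule.span_le.mpr (fun x hx => LinearMap.mem_ker.mpr (h x hx))
  rw [hS, top_le_iff] at hle
  funext j
  have hmem : Pi.single j (1:F) ∈ LinearMap.ker L := hle ▸ Submodule.mem_top
  have : L (Pi.single j 1) = 0 := LinearMap.mem_ker.mp hmem
  simpa [L, dot_single] using this

end Aux

/-- main theorem: suppose
(a) `V(f)*` spans `F_q^n`, contains no punctured hyperplane `H(v) \ {0}`, and its
intersection with any hyperplane `H(v)` is not contained in a different hyperplane
`H(v')`; and (b) for every nonzero `v` there exists `x` with `f(x) + v·x = 0` and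
`f(x) ≠ 0`.  Then `C_f` is a minimal linear code of length `q^n - 1` and
dimension `n + 1`. -/
theorem stmt11 (F : Type) [Field F] [Fintype F] [DecidableEq F] (n : ℕ) (hn : 2 ≤ n)
    (f : (Fin n → F) → F)
    (ha1 : Submodule.span F {x : Fin n → F | x ≠ 0 ∧ f x = 0} = ⊤)
    (ha2 : ∀ v : Fin n → F, v ≠ 0 →
      ¬ ({x : Fin n → F | ∑ i, v i * x i = 0} \ {0} ⊆ {x : Fin n → F | x ≠ 0 ∧ f x = 0}))
    (ha3 : ∀ v v' : Fin n → F, v ≠ 0 → v' ≠ 0 →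
      {x : Fin n → F | ∑ i, v i * x i = 0} ≠ {x : Fin n → F | ∑ i, v' i * x i = 0} →
      ¬ ({x : Fin n → F | x ≠ 0 ∧ f x = 0} ∩ {x : Fin n → F | ∑ i, v i * x i = 0} ⊆
          {x : Fin n → F | ∑ i, v' i * x i = 0}))
    (hb : ∀ v : Fin n → F, v ≠ 0 →
      ∃ x : Fin n → F, f x + ∑ i, v i * x i = 0 ∧ f x ≠ 0) :
    Fintype.card {x : Fin n → F // x ≠ 0} = Fintype.card F ^ n - 1 ∧
    Module.finrank F ↥(Submodule.span F (Set.range (cfWord F n f))) = n + 1 ∧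
    (∀ c ∈ Set.range (cfWord F n f), c ≠ 0 → ∀ c' ∈ Set.range (cfWord F n f),
      (∀ x, c' x ≠ 0 → c x ≠ 0) → ∃ lam : F, c' = lam • c) := by
  -- Part 1: cardinality
  have part1 : Fintype.card {x : Fin n → F // x ≠ 0} = Fintype.card F ^ n - 1 := by
    rw [Fintype.card_subtype_compl, Fintype.card_pi]
    simp [Fintype.card_subtype_eq]
  -- The linear map
  let L : (F × (Fin n → F)) →ₗ[F] ({x : Fin n → F // x ≠ 0} → F) :=
    { toFun := cfWord F n f
      map_add' := by
        intro p q
        funext x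
        simp [cfWord, add_mul, Finset.sum_add_distrib]
        ring
      map_smul' := by
        intro c p
        funext x
        simp [cfWord, Finset.mul_sum, mul_assoc, mul_add] }
  -- Injectivity of L
  have hinj : Function.Injective L := by
    rw [← LinearMap.ker_eq_bot, LinearMap.ker_eq_bot']
    rintro ⟨u, v⟩ hp
    have hp' : ∀ x : Fin n → F, x ≠ 0 → u * f x + ∑ i, v i * x i = 0 := by
      intro x hx
      exact congrFun hp ⟨x, hx⟩
    by_cases h1 : u = 0
    · have hv : v = 0 := by
        funext j
        have := hp' (Pi.single j 1) (single_ne_zero' j)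
        rw [h1, dot_single] at this
        simpa using this
      simp [h1, hv, Prod.ext_iff]
    · exfalso
      by_cases h2 : v = 0
      · obtain ⟨x, hx1, hx2⟩ := hb (Pi.single ⟨0, by omega⟩ 1) (single_ne_zero' _)
        have hxne : x ≠ 0 := by
          intro hz
          rw [hz] at hx1 hx2
          simp at hx1
          exact hx2 hx1
        have := hp' x hxne
        rw [h2] at this
        simp at this
        rcases this with h | h
        · exact h1 h
        · exact hx2 h
      · apply ha2 v h2
        rintro x ⟨hxH, hx0⟩
        simp only [Set.mem_setOf_eq] at hxH
        simp only [Set.mem_singleton_iff] at hx0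
        refine ⟨hx0, ?_⟩
        have := hp' x hx0
        rw [hxH, add_zero] at this
        rcases mul_eq_zero.mp this with h | h
        · exact absurd h h1
        · exact h
  -- Part 2: dimension
  have part2 : Module.finrank F ↥(Submodule.span F (Set.range (cfWord F n f))) = n + 1 := by
    have hrange : Set.range (cfWord F n f) = ↑(LinearMap.range L) := by
      rw [LinearMap.coe_range]
      rfl
    rw [hrange, Submodule.span_eq]
    rw [LinearMap.finrank_range_of_inj hinj]
    rw [Module.finrank_prod, Module.finrank_self, Module.finrank_pi]
    simp [Fintype.card_fin]
    omega
  refine ⟨part1, part2, ?_⟩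
  -- Part 3: minimality
  rintro c ⟨p, rfl⟩ hc c' ⟨p', rfl⟩ hsupp
  obtain ⟨u, v⟩ := p
  obtain ⟨u', v'⟩ := p'
  -- the support condition, contrapositive form
  have hsupp' : ∀ x : Fin n → F, x ≠ 0 → u * f x + ∑ i, v i * x i = 0 →
      u' * f x + ∑ i, v' i * x i = 0 := by
    intro x hx h0
    by_contra hne
    exact (hsupp ⟨x, hx⟩ hne) h0
  by_cases h1 : u = 0
  · -- c = (v·x)
    have hv : v ≠ 0 := by
      intro hz
      apply hc
      funext x
      simp [cfWord, h1, hz]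
    by_cases h1' : u' = 0
    · -- both u = u' = 0 : hyperplane comparison
      obtain ⟨lam, hlam⟩ := dot_ker v v' (by
        intro x hx hdot
        have := hsupp' x hx (by rw [h1, hdot]; ring)
        rw [h1'] at this
        simpa using this)
      refine ⟨lam, ?_⟩
      funext x
      simp only [cfWord, h1, h1', Pi.smul_apply, smul_eq_mul, zero_mul, zero_add]
      rw [Finset.mul_sum]
      exact Finset.sum_congr rfl (fun i _ => by rw [hlam i]; ring)
    · -- u = 0, u' ≠ 0 : impossible
      exfalso
      by_cases h2' : v' = 0
      · -- H(v)* ⊆ V(f)*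
        apply ha2 v hv
        rintro x ⟨hxH, hx0⟩
        simp only [Set.mem_setOf_eq] at hxH
        simp only [Set.mem_singleton_iff] at hx0
        refine ⟨hx0, ?_⟩
        have := hsupp' x hx0 (by rw [h1, hxH]; ring)
        rw [h2'] at this
        simp at this
        rcases this with h | h
        · exact absurd h h1'
        · exact h
      · by_cases hHH : {x : Fin n → F | ∑ i, v i * x i = 0} =
            {x : Fin n → F | ∑ i, v' i * x i = 0}
        · -- same hyperplane: H(v)* ⊆ V(f)*
          apply ha2 v hv
          rintro x ⟨hxH, hx0⟩
          simp only [Set.mem_setOf_eq] at hxH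
          simp only [Set.mem_singleton_iff] at hx0
          refine ⟨hx0, ?_⟩
          have hxH' : ∑ i, v' i * x i = 0 := by
            simpa using (Set.ext_iff.mp hHH x).mp hxH
          have := hsupp' x hx0 (by rw [h1, hxH]; ring)
          rw [hxH', add_zero] at this
          rcases mul_eq_zero.mp this with h | h
          · exact absurd h h1'
          · exact h
        · -- different hyperplanes: contradict ha3
          apply ha3 v v' hv h2' hHH
          rintro x ⟨⟨hx0, hxf⟩, hxH⟩
          simp only [Set.mem_setOf_eq] at hxH ⊢
          have := hsupp' x hx0 (by rw [h1, hxH, hxf]; ring)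
          rw [hxf] at this
          simpa using this
  · -- u ≠ 0 : show c' = (u'/u) • c
    refine ⟨u' / u, ?_⟩
    -- w'' := v' - (u'/u) • v ; show w'' = 0
    set w : Fin n → F := fun i => u * v' i - u' * v i with hw
    have key : ∀ x : Fin n → F, x ≠ 0 → u * f x + ∑ i, v i * x i = 0 →
        ∑ i, w i * x i = 0 := by
      intro x hx h0
      have h0' := hsupp' x hx h0
      have hsum : ∑ i, w i * x i =
          u * (∑ i, v' i * x i) - u' * ∑ i, v i * x i := by
        rw [Finset.mul_sum, Finset.mul_sum, ← Finset.sum_sub_distrib]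
        exact Finset.sum_congr rfl (fun i _ => by simp only [hw]; ring)
      rw [hsum]
      linear_combination u * h0' - u' * h0
    have hw0 : w = 0 := by
      by_contra hwne
      by_cases h2 : v = 0
      · -- zeros of c are V(f)*, which spans: w = 0
        apply hwne
        apply eq_zero_of_span_le w _ ha1
        rintro x ⟨hx0, hxf⟩
        exact key x hx0 (by rw [hxf, h2]; simp)
      · -- v ≠ 0
        by_cases hHH : {x : Fin n → F | ∑ i, v i * x i = 0} =
            {x : Fin n → F | ∑ i, w i * x i = 0}
        · -- use hb to find x with f x ≠ 0 and c x = 0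
          have hvu : (fun i => u⁻¹ * v i) ≠ 0 := by
            intro hz
            apply h2
            funext i
            have := congrFun hz i
            simp at this
            rcases this with h | h
            · exact absurd h h1
            · simp [h]
          obtain ⟨x, hx1, hx2⟩ := hb _ hvu
          have hxne : x ≠ 0 := by
            intro hz
            rw [hz] at hx1 hx2
            simp at hx1
            exact hx2 hx1
          have hcx : u * f x + ∑ i, v i * x i = 0 := by
            have : u * (f x + ∑ i, u⁻¹ * v i * x i) = 0 := by rw [hx1]; ring
            rw [mul_add, Finset.mul_sum] at this
            have he : ∀ i ∈ Finset.univ, u * (u⁻¹ * v i * x i) = v i * x i := by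
              intro i _
              field_simp
            rw [Finset.sum_congr rfl he] at this
            exact this
          have hxw : ∑ i, w i * x i = 0 := key x hxne hcx
          have hxv : ∑ i, v i * x i = 0 := by
            have := (Set.ext_iff.mp hHH x).mpr hxw
            simpa using this
          rw [hxv, add_zero] at hcx
          rcases mul_eq_zero.mp hcx with h | h
          · exact h1 h
          · exact hx2 h
        · apply ha3 v w h2 hwne hHH
          rintro x ⟨⟨hx0, hxf⟩, hxH⟩
          simp only [Set.mem_setOf_eq] at hxH ⊢
          exact key x hx0 (by rw [hxf, hxH]; ring)
    -- conclude: v' = (u'/u) • v, so c' = (u'/u) • c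
    have hv' : ∀ i, v' i = u' / u * v i := by
      intro i
      have h := congrFun hw0 i
      simp only [hw, Pi.zero_apply] at h
      field_simp
      linear_combination h
    funext x
    simp only [cfWord, Pi.smul_apply, smul_eq_mul]
    rw [mul_add, Finset.mul_sum]
    have : ∀ i ∈ Finset.univ, v' i * x.1 i = u' / u * (v i * x.1 i) := by
      intro i _
      rw [hv' i]; ring
    rw [Finset.sum_congr rfl this]
    congr 1
    field_simp
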